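/- Let α > 1, σ > 0, k > 0, c := σ/(αk), f(R) := √(1 + 4c/R + c²/R²) and θ₊(R) := (2 + c/R + f(R))/(3α). Then the linearized elastic energy term P^{el}_{k,R}(θ₊(R)) := kR³θ₊(R)(αθ₊(R) − 1)² satisfies P^{el}_{k,R}(θ₊(R)) = (σ²/(α³k))·R + o(R) as R → +∞; equivalently, lim_{R→∞} kR²θ₊(R)(αθ₊(R) − 1)² = σ²/(α³k). -/

import Mathlib

open Filter

noncomputable section

/-- The discriminant factor `f(R) = √(1 + 4c/R + c²/R²)`. -/
def fdisc (c R : ℝ) : ℝ := Real.sqrt (1 + 4*c/R + c^2/R^2)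

/-- The critical point `θ₊(R) = (2 + c/R + f(R))/(3α)`. -/
def θplus (α c R : ℝ) : ℝ := (2 + c/R + fdisc c R) / (3*α)

/-- The critical point `θ₋(R) = (2 + c/R − f(R))/(3α)`. -/
def θminus (α c R : ℝ) : ℝ := (2 + c/R - fdisc c R) / (3*α)

/-- The total energy polynomial `P_{k,R}(θ) = kR³θ(αθ−1)² + σR²(1−θ²)`. -/
def Ptot (α σ k R θ : ℝ) : ℝ := k*R^3*θ*(α*θ - 1)^2 + σ*R^2*(1 - θ^2)


lemma elastic_aux (α c k : ℝ) (hα0 : 0 < α) (hc : 0 < c) (hk : 0 < k) :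
    Filter.Tendsto (fun R : ℝ =>
        k * R^2 * θplus α c R * (α * θplus α c R - 1)^2)
      atTop (nhds (k * (1/α) * c^2)) := by
  have hR : Tendsto (fun R:ℝ => R) atTop atTop := tendsto_id
  have h1 : Tendsto (fun R:ℝ => c/R) atTop (nhds 0) := tendsto_const_nhds.div_atTop hR
  have h2 : Tendsto (fun R:ℝ => 4*c/R) atTop (nhds 0) := tendsto_const_nhds.div_atTop hR
  have h3 : Tendsto (fun R:ℝ => c^2/R^2) atTop (nhds 0) :=
    tendsto_const_nhds.div_atTop (tendsto_pow_atTop two_ne_zero)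
  have hfd : Tendsto (fun R => fdisc c R) atTop (nhds 1) := by
    have hin : Tendsto (fun R:ℝ => 1 + 4*c/R + c^2/R^2) atTop (nhds (1+0+0)) :=
      (tendsto_const_nhds.add h2).add h3
    have := (Real.continuous_sqrt.tendsto (1+0+0)).comp hin
    simpa [fdisc, Function.comp_def, Real.sqrt_one] using this
  have hθ : Tendsto (fun R => θplus α c R) atTop (nhds (1/α)) := by
    have h2c : Tendsto (fun R:ℝ => 2 + c/R + fdisc c R) atTop (nhds (2+0+1)) :=
      ((tendsto_const_nhds (x := (2:ℝ))).add h1).add hfd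
    have := h2c.div_const (3*α)
    have heq : ((2:ℝ)+0+1)/(3*α) = 1/α := by
      field_simp
      norm_num
    rw [heq] at this
    simpa [θplus] using this
  have h4 : Tendsto (fun R:ℝ => c^2/R) atTop (nhds 0) := tendsto_const_nhds.div_atTop hR
  have hnum : Tendsto (fun R:ℝ => 4*c + c^2/R) atTop (nhds (4*c)) := by
    simpa using (tendsto_const_nhds (x := 4*c)).add h4
  have hden : Tendsto (fun R => fdisc c R + 1) atTop (nhds 2) := by
    have := hfd.add (tendsto_const_nhds (x := (1:ℝ)))
    norm_num at this; exact this
  have hq : Tendsto (fun R => (4*c + c^2/R)/(fdisc c R + 1)) atTop (nhds (4*c/2)) :=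
    hnum.div hden (by norm_num)
  have hE : Tendsto (fun R:ℝ => (c + (4*c + c^2/R)/(fdisc c R + 1))/3) atTop (nhds c) := by
    have := ((tendsto_const_nhds (x := c)).add hq).div_const 3
    have heq : (c + 4*c/2)/3 = c := by ring
    rwa [heq] at this
  have hmain : Tendsto (fun R:ℝ =>
      k * θplus α c R * ((c + (4*c + c^2/R)/(fdisc c R + 1))/3)^2)
      atTop (nhds (k * (1/α) * c^2)) :=
    (tendsto_const_nhds.mul hθ).mul (hE.pow 2)
  refine hmain.congr' ?_
  filter_upwards [eventually_gt_atTop (0:ℝ)] with R hR0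
  have hRne : R ≠ 0 := ne_of_gt hR0
  have harg : 0 ≤ 1 + 4*c/R + c^2/R^2 := by positivity
  have hfsq : (fdisc c R)^2 = 1 + 4*c/R + c^2/R^2 := Real.sq_sqrt harg
  have hfnn : 0 ≤ fdisc c R := Real.sqrt_nonneg _
  have hfne : fdisc c R + 1 ≠ 0 := by positivity
  have hαne : α ≠ 0 := ne_of_gt hα0
  have hkey : R * (fdisc c R - 1) = (4*c + c^2/R)/(fdisc c R + 1) := by
    rw [eq_div_iff hfne]
    have h5 : R*(fdisc c R - 1)*(fdisc c R + 1) = R*((fdisc c R)^2 - 1) := by ring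
    rw [h5, hfsq]
    field_simp
    ring
  have hθeq : α * θplus α c R - 1 = (c/R + fdisc c R - 1)/3 := by
    rw [θplus]; field_simp; ring
  have hstep : (c + (4*c + c^2/R)/(fdisc c R + 1))/3 = R * (α * θplus α c R - 1) := by
    rw [hθeq, ← hkey]
    field_simp
    ring
  show k * θplus α c R * ((c + (4*c + c^2/R)/(fdisc c R + 1))/3)^2
      = k * R^2 * θplus α c R * (α * θplus α c R - 1)^2
  rw [hstep]; ring

/-- the linearized elastic energy at the minimizer satisfies
`P^{el}_{k,R}(θ₊(R)) = (σ²/(α³k))R + o(R)`, i.e.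
`kR²θ₊(R)(αθ₊(R) − 1)² → σ²/(α³k)` as `R → +∞`. -/
theorem elastic_part_linear_growth (α σ k : ℝ) (hα : 1 < α) (hσ : 0 < σ) (hk : 0 < k) :
    Tendsto (fun R : ℝ =>
        k * R^2 * θplus α (σ/(α*k)) R * (α * θplus α (σ/(α*k)) R - 1)^2)
      atTop (nhds (σ^2 / (α^3 * k))) := by
  have hα0 : (0:ℝ) < α := by linarith
  have hc : 0 < σ/(α*k) := div_pos hσ (mul_pos hα0 hk)
  have h := elastic_aux α (σ/(α*k)) k hα0 hc hk
  have hval : k * (1/α) * (σ/(α*k))^2 = σ^2 / (α^3 * k) := by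
    field_simp
  rwa [hval] at h
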